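/- Let r = e₀(e)₁e₁\1 e₂ and w a string. Suppose w ∈ L(e₀ β e₁ β e₂) for some nonempty β ∈ L(e). Then with α := r(β) the right-extension of β to a right-maximal repeat of w, β is an α-extendable prefix of α, β ∈ L(e), and w ∈ L(e₀ β e₁ β e₂). (Hence checking, for each right-maximal repeat α of w, whether some α-extendable prefix β of α satisfies β ∈ L(e) and w ∈ L(e₀ β e₁ β e₂), is a complete decision procedure for membership in L(r) among matches with nonempty backreferenced substring.) -/
import Mathlib


open Set List

variable {A : Type*}

/-- `β` occurs in `w` at (0-indexed) position `i`, i.e. `w[i..i+|β|-1] = β`. -/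
def OccursAt (w β : List A) (i : ℕ) : Prop := β <+: w.drop i

/-- A repeat of `w`: a nonempty string occurring in `w` at two distinct positions. -/
def IsRepeat (w β : List A) : Prop :=
  β ≠ [] ∧ ∃ i j, i ≠ j ∧ OccursAt w β i ∧ OccursAt w β j

/-- A right-maximal repeat of `w`: a repeat with two occurrences whose right-adjacent
characters differ.  The right-adjacent character of the occurrence at `i` is
`w[i+|β|]?  : Option A`; the value `none` (an occurrence at the right end of `w`)
plays the role of the special character distinct from all alphabet characters. -/
def IsRMRepeat (w β : List A) : Prop :=
  β ≠ [] ∧ ∃ i j, i ≠ j ∧ OccursAt w β i ∧ OccursAt w β j ∧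
    w[i + β.length]? ≠ w[j + β.length]?

/-- `RightExtClosure w β α` says that `α = r(β)`, the right-maximal repeat obtained
from `β` by repeatedly appending the unique common right-adjacent character of all
of its occurrences: equivalently, `α` is a right-maximal repeat of `w` extending `β`
such that no intermediate extension `γ` (with `β ≤ γ < α`) is already right-maximal. -/
def RightExtClosure (w β α : List A) : Prop :=
  IsRMRepeat w α ∧ β <+: α ∧
    ∀ γ, β <+: γ → γ <+: α → γ ≠ α → ¬ IsRMRepeat w γ

lemma occ_bound {w γ : List A} {i : ℕ} (hne : γ ≠ []) (h : OccursAt w γ i) :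
    i + γ.length ≤ w.length := by
  have hl := h.length_le
  rw [List.length_drop] at hl
  have hγ : 0 < γ.length := List.length_pos_iff.mpr hne
  omega

lemma occ_ext {w γ : List A} {i : ℕ} {a : A} (h : OccursAt w γ i)
    (ha : w[i + γ.length]? = some a) : OccursAt w (γ ++ [a]) i := by
  obtain ⟨t, ht⟩ := h
  have h2 : (w.drop i)[γ.length]? = some a := by
    rw [List.getElem?_drop]; exact ha
  rw [← ht] at h2
  cases t with
  | nil => simp at h2
  | cons b t' =>
    rw [List.getElem?_append_right (le_refl _)] at h2
    simp at h2
    exact ⟨t', by simp [OccursAt, ← ht, h2]⟩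

lemma exists_rm_ext (w β : List A) :
    ∀ k γ, β <+: γ → IsRepeat w γ → w.length ≤ γ.length + k →
      ∃ α, β <+: α ∧ IsRMRepeat w α := by
  intro k
  induction k with
  | zero =>
    rintro γ hpre ⟨hne, i, j, hij, hi, hj⟩ hlen
    have h1 := occ_bound hne hi
    have h2 := occ_bound hne hj
    omega
  | succ k ih =>
    rintro γ hpre ⟨hne, i, j, hij, hi, hj⟩ hlen
    by_cases hrm : IsRMRepeat w γ
    · exact ⟨γ, hpre, hrm⟩
    · have heq : w[i + γ.length]? = w[j + γ.length]? := by
        by_contra hne'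
        exact hrm ⟨hne, i, j, hij, hi, hj, hne'⟩
      have h1 := occ_bound hne hi
      have h2 := occ_bound hne hj
      obtain ⟨a, ha⟩ : ∃ a, w[i + γ.length]? = some a := by
        cases hcase : w[i + γ.length]? with
        | some a => exact ⟨a, rfl⟩
        | none =>
          rw [hcase] at heq
          rw [List.getElem?_eq_none_iff] at hcase
          have hnone : w[j + γ.length]? = none := heq.symm
          rw [List.getElem?_eq_none_iff] at hnone
          omega
      have hb : w[j + γ.length]? = some a := by rw [← heq]; exact ha
      refine ih (γ ++ [a]) (hpre.trans (List.prefix_append γ [a]))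
        ⟨by simp, i, j, hij, occ_ext hi ha, occ_ext hj hb⟩ (by simp; omega)

lemma exists_closure (w β : List A) :
    ∀ n α, α.length = n → β <+: α → IsRMRepeat w α →
      ∃ α', RightExtClosure w β α' ∧ β <+: α' := by
  intro n
  induction n using Nat.strong_induction_on with
  | _ n ih =>
    intro α hlen hpre hrm
    by_cases h : ∃ γ, β <+: γ ∧ γ <+: α ∧ γ ≠ α ∧ IsRMRepeat w γ
    · obtain ⟨γ, h1, h2, h3, h4⟩ := h
      have hlt : γ.length < α.length :=
        lt_of_le_of_ne h2.length_le (fun he => h3 (h2.eq_of_length he))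
      exact ih γ.length (hlen ▸ hlt) γ rfl h1 h4
    · push_neg at h
      exact ⟨α, ⟨hrm, hpre, fun γ hg1 hg2 hg3 => h γ hg1 hg2 hg3⟩, hpre⟩


/-- if `w ∈ L(e₀ β e₁ β e₂)` for some nonempty `β ∈ L(e)`, then `β` is a
repeat of `w`, and taking `α := r(β)` (its right-extension to a right-maximal repeat of
`w`), `β` is an `α`-extendable prefix of `α`, `β ∈ L(e)` and `w ∈ L(e₀ β e₁ β e₂)`.
Hence examining, for each right-maximal repeat `α` of `w`, the `α`-extendable prefixes of
`α` is complete for matches with nonempty backreferenced substring. -/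
theorem extendable_prefix_complete (e₀ e e₁ e₂ : RegularExpression A) (w β : List A)
    (hβne : β ≠ []) (hβe : β ∈ e.matches')
    (hmatch : ∃ w₀ w₁ w₂, w₀ ∈ e₀.matches' ∧ w₁ ∈ e₁.matches' ∧ w₂ ∈ e₂.matches' ∧
        w = w₀ ++ β ++ w₁ ++ β ++ w₂) :
    IsRepeat w β ∧
    ∃ α, RightExtClosure w β α ∧ β <+: α ∧ β ∈ e.matches' ∧
      ∃ w₀ w₁ w₂, w₀ ∈ e₀.matches' ∧ w₁ ∈ e₁.matches' ∧ w₂ ∈ e₂.matches' ∧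
        w = w₀ ++ β ++ w₁ ++ β ++ w₂ := by
  obtain ⟨w₀, w₁, w₂, h₀, h₁, h₂, hw⟩ := hmatch
  have hocc1 : OccursAt w β w₀.length := by
    unfold OccursAt
    rw [hw]
    simp [List.append_assoc, List.drop_left']
  have hocc2 : OccursAt w β (w₀.length + β.length + w₁.length) := by
    unfold OccursAt
    rw [hw]
    have he : w₀ ++ β ++ w₁ ++ β ++ w₂ = (w₀ ++ β ++ w₁) ++ (β ++ w₂) := by
      simp [List.append_assoc]
    rw [he, show w₀.length + β.length + w₁.length = (w₀ ++ β ++ w₁).length by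
      simp; omega, List.drop_left]
    exact List.prefix_append β w₂
  have hij : w₀.length ≠ w₀.length + β.length + w₁.length := by
    have : 0 < β.length := List.length_pos_iff.mpr hβne
    omega
  have hrep : IsRepeat w β := ⟨hβne, _, _, hij, hocc1, hocc2⟩
  obtain ⟨α, hαpre, hαrm⟩ :=
    exists_rm_ext w β w.length β List.prefix_rfl hrep (by omega)
  obtain ⟨α', hcl, hpre'⟩ := exists_closure w β α.length α rfl hαpre hαrm
  exact ⟨hrep, α', hcl, hpre', hβe, w₀, w₁, w₂, h₀, h₁, h₂, hw⟩
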